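/- For every KAT expression e and every relational interpretation (S, τ, σ), the relational semantics satisfies R⟦e⟧ = { (s,s') : there exists a labeled path π from s to s' whose induced guarded string w_π lies in L(e) }. Consequently, if L(e) = L(f) then R⟦e⟧ = R⟦f⟧ for all interpretations. -/
import Mathlib


/-- A guarded string candidate: a list of atoms (sets of tests) and actions. -/
abbrev GList (A T : Type) := List (Set T ⊕ A)

/-- Guarded strings: nonempty alternating sequences starting and ending with an atom. -/
inductive IsGuarded {A T : Type} : GList A T → Prop
  | single (α : Set T) : IsGuarded [Sum.inl α]
  | cons (α : Set T) (p : A) {l : GList A T} : IsGuarded l →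
      IsGuarded (Sum.inl α :: Sum.inr p :: l)

/-- Guarded composition of guarded languages: fuse matching boundary atoms. -/
def gcomp {A T : Type} (L K : Set (GList A T)) : Set (GList A T) :=
  { z | ∃ (w : GList A T) (α : Set T) (x : GList A T),
      w ++ [Sum.inl α] ∈ L ∧ Sum.inl α :: x ∈ K ∧ z = w ++ Sum.inl α :: x }

/-- The language of all length-one guarded strings (all atoms). -/
def atomsLang {A T : Type} : Set (GList A T) := { w | ∃ α : Set T, w = [Sum.inl α] }

/-- Iterated guarded composition. -/
def gpow {A T : Type} (L : Set (GList A T)) : ℕ → Set (GList A T)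
  | 0 => atomsLang
  | n + 1 => gcomp L (gpow L n)

/-- Guarded star. -/
def gstar {A T : Type} (L : Set (GList A T)) : Set (GList A T) := ⋃ n, gpow L n

/-- Boolean (test) expressions over test variables T. -/
inductive BExp (T : Type) where
  | tru : BExp T
  | fls : BExp T
  | var (t : T) : BExp T
  | or (b c : BExp T) : BExp T
  | and (b c : BExp T) : BExp T
  | not (b : BExp T) : BExp T

/-- Satisfaction of a test by an atom (truth assignment). -/
def BExp.holds {T : Type} (α : Set T) : BExp T → Prop
  | .tru => True
  | .fls => False
  | .var t => t ∈ α
  | .or b c => BExp.holds α b ∨ BExp.holds α c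
  | .and b c => BExp.holds α b ∧ BExp.holds α c
  | .not b => ¬ BExp.holds α b

/-- The guarded language of a test. -/
def testLang {A T : Type} (b : BExp T) : Set (GList A T) :=
  { w | ∃ α : Set T, b.holds α ∧ w = [Sum.inl α] }

/-- KAT expressions over actions A and tests T. -/
inductive KExp (A T : Type) where
  | test (b : BExp T) : KExp A T
  | act (p : A) : KExp A T
  | plus (e f : KExp A T) : KExp A T
  | seq (e f : KExp A T) : KExp A T
  | star (e : KExp A T) : KExp A T

/-- Language semantics of KAT. -/
def lang {A T : Type} : KExp A T → Set (GList A T)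
  | .test b => testLang b
  | .act p => { w | ∃ α β : Set T, w = [Sum.inl α, Sum.inr p, Sum.inl β] }
  | .plus e f => lang e ∪ lang f
  | .seq e f => gcomp (lang e) (lang f)
  | .star e => gstar (lang e)

/-- Semantics of a test under a valuation τ on states S. -/
def bsem {T S : Type} (τ : T → Set S) : BExp T → Set S
  | .tru => Set.univ
  | .fls => ∅
  | .var t => τ t
  | .or b c => bsem τ b ∪ bsem τ c
  | .and b c => bsem τ b ∩ bsem τ c
  | .not b => (bsem τ b)ᶜ

/-- Relational semantics of KAT under an interpretation (S, τ, σ). -/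
def rsem {A T S : Type} (τ : T → Set S) (σ : A → S → S → Prop) : KExp A T → S → S → Prop
  | .test b => fun s s' => s = s' ∧ s ∈ bsem τ b
  | .act p => σ p
  | .plus e f => fun s s' => rsem τ σ e s s' ∨ rsem τ σ f s s'
  | .seq e f => fun s s' => ∃ s'', rsem τ σ e s s'' ∧ rsem τ σ f s'' s'
  | .star e => Relation.ReflTransGen (rsem τ σ e)

/-- A relation is a partial function. -/
def Functional {S : Type} (r : S → S → Prop) : Prop :=
  ∀ s s₁ s₂, r s s₁ → r s s₂ → s₁ = s₂

/-- A KAT expression is deterministic: it maps functional interpretations to functional relations. -/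
def DetExp {A T : Type} (e : KExp A T) : Prop :=
  ∀ (S : Type) (τ : T → Set S) (σ : A → S → S → Prop),
    (∀ p, Functional (σ p)) → Functional (rsem τ σ e)

/-- A guarded language is deterministic: no member is a proper prefix of another, and
any two distinct members first differ at an atom. -/
def DetLang {A T : Type} (L : Set (GList A T)) : Prop :=
  ∀ w ∈ L, ∀ x ∈ L, w ≠ x →
    ∃ (l w' x' : GList A T) (α β : Set T), α ≠ β ∧
      w = l ++ Sum.inl α :: w' ∧ x = l ++ Sum.inl β :: x'

/-- The atom of a state: the set of tests true at it. -/
def atomOf {T S : Type} (τ : T → Set S) (s : S) : Set T := { t | s ∈ τ t }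

/-- Labeled paths in an interpretation, together with their induced guarded strings. -/
inductive IsPath {A T S : Type} (τ : T → Set S) (σ : A → S → S → Prop) :
    S → GList A T → S → Prop
  | nil (s : S) : IsPath τ σ s [Sum.inl (atomOf τ s)] s
  | cons {s s' s'' : S} {p : A} {w : GList A T} :
      σ p s s' → IsPath τ σ s' w s'' →
      IsPath τ σ s (Sum.inl (atomOf τ s) :: Sum.inr p :: w) s''

/-- GKAT expressions. -/
inductive GExp (A T : Type) where
  | assert (b : BExp T) : GExp A T
  | act (p : A) : GExp A T
  | seq (e f : GExp A T) : GExp A T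
  | ite (b : BExp T) (e f : GExp A T) : GExp A T
  | whl (b : BExp T) (e : GExp A T) : GExp A T

/-- Language semantics of GKAT. -/
def glang {A T : Type} : GExp A T → Set (GList A T)
  | .assert b => testLang b
  | .act p => { w | ∃ α β : Set T, w = [Sum.inl α, Sum.inr p, Sum.inl β] }
  | .seq e f => gcomp (glang e) (glang f)
  | .ite b e f => gcomp (testLang b) (glang e) ∪ gcomp (testLang b.not) (glang f)
  | .whl b e => gcomp (gstar (gcomp (testLang b) (glang e))) (testLang b.not)

/-- Output of a deterministic KAT automaton on a state and atom. -/
inductive Out (A Q : Type) where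
  | accept : Out A Q
  | reject : Out A Q
  | step (p : A) (q : Q) : Out A Q

/-- Acceptance in a deterministic KAT automaton with transition function δ,
starting from dynamics γ. -/
inductive AccFrom {A T Q : Type} (δ : Q → Set T → Out A Q) :
    (Set T → Out A Q) → GList A T → Prop
  | accept {γ : Set T → Out A Q} {α : Set T} :
      γ α = Out.accept → AccFrom δ γ [Sum.inl α]
  | step {γ : Set T → Out A Q} {α : Set T} {p : A} {q : Q} {w : GList A T} :
      γ α = Out.step p q → AccFrom δ (δ q) w →
      AccFrom δ γ (Sum.inl α :: Sum.inr p :: w)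

/-- Brzozowski derivative of a language with respect to a word. -/
def dl {A T : Type} (L : Set (GList A T)) (u : GList A T) : Set (GList A T) :=
  { x | u ++ x ∈ L }

/-- An atom β over T₁ is 𝔱-consistent with an atom α over T₀. -/
def TConsistent {T₀ T₁ : Type} (𝔱 : T₀ → BExp T₁) (α : Set T₀) (β : Set T₁) : Prop :=
  ∀ t, t ∈ α ↔ (𝔱 t).holds β

/-- Atom-replacement relation induced by a test substitution 𝔱. -/
inductive TRel {A T₀ T₁ : Type} (𝔱 : T₀ → BExp T₁) : GList A T₀ → GList A T₁ → Prop
  | nil : TRel 𝔱 [] []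
  | atom {α : Set T₀} {β : Set T₁} {w : GList A T₀} {x : GList A T₁} :
      TConsistent 𝔱 α β → TRel 𝔱 w x → TRel 𝔱 (Sum.inl α :: w) (Sum.inl β :: x)
  | act {p : A} {w : GList A T₀} {x : GList A T₁} :
      TRel 𝔱 w x → TRel 𝔱 (Sum.inr p :: w) (Sum.inr p :: x)

/-- apply_𝔱 on guarded languages. -/
def applyT {A T₀ T₁ : Type} (𝔱 : T₀ → BExp T₁) (L : Set (GList A T₀)) : Set (GList A T₁) :=
  { x | ∃ w ∈ L, TRel 𝔱 w x }

/-- Action-replacement relation induced by an action substitution 𝔰: each action is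
replaced by a guarded string of 𝔰(p), fused with the surrounding atoms. -/
inductive SRel {A₀ A₁ T : Type} (𝔰 : A₀ → Set (GList A₁ T)) :
    GList A₀ T → GList A₁ T → Prop
  | single (α : Set T) : SRel 𝔰 [Sum.inl α] [Sum.inl α]
  | step {α β : Set T} {p : A₀} {u : GList A₁ T} {w : GList A₀ T} {x : GList A₁ T} :
      Sum.inl α :: u ++ [Sum.inl β] ∈ 𝔰 p →
      SRel 𝔰 (Sum.inl β :: w) (Sum.inl β :: x) →
      SRel 𝔰 (Sum.inl α :: Sum.inr p :: Sum.inl β :: w) (Sum.inl α :: u ++ Sum.inl β :: x)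

/-- apply^𝔰 on guarded languages. -/
def applyS {A₀ A₁ T : Type} (𝔰 : A₀ → Set (GList A₁ T)) (L : Set (GList A₀ T)) :
    Set (GList A₁ T) :=
  { x | ∃ w ∈ L, SRel 𝔰 w x }

/-- Builder for the guarded strings of the language L_k. -/
def buildLk {k : ℕ} : Fin k → Fin k → List (Fin k) → GList (Fin k) (Fin k)
  | cur, act, [] => [Sum.inl {cur}, Sum.inr act, Sum.inl {cur}]
  | cur, act, j :: rest => Sum.inl {cur} :: Sum.inr act :: buildLk j cur rest

/-- The language L_k of Definition 6.2. -/
def Lk (k : ℕ) (hk : 0 < k) : Set (GList (Fin k) (Fin k)) :=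
  { w | ∃ (i : Fin k) (rest : List (Fin k)),
      i ≠ ⟨0, hk⟩ ∧ List.Chain' (· ≠ ·) (i :: rest) ∧ w = buildLk i ⟨0, hk⟩ rest }

/-- k-density of a deterministic KAT automaton transition function. -/
def KDense {A T Q : Type} (δ : Q → Set T → Out A Q) (k : ℕ) : Prop :=
  ∃ (S : Fin k → Set Q) (α : Fin k → Set T) (pa : Q → Fin k → A),
    Function.Injective α ∧
    (∀ i, (S i).Nonempty) ∧
    (∀ i q, q ∈ S i → δ q (α i) = Out.accept) ∧
    (∀ i j q, i ≠ j → q ∈ S i → ∃ q' ∈ S j, δ q (α j) = Out.step (pa q j) q') ∧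
    (∀ i j m q q', q ∈ S i → q' ∈ S j → pa q m = pa q' m → i = j)

/-- The sequence of actions occurring in a guarded string. -/
def actsOf {A T : Type} (w : GList A T) : List A :=
  w.filterMap (fun x => match x with | .inl _ => none | .inr p => some p)

/-- The guarded language of a word over Σ: all guarded strings with that action sequence. -/
def wordLang {A T : Type} (ps : List A) : Set (GList A T) :=
  { w | IsGuarded w ∧ actsOf w = ps }

/-- Test expressions without test variables. -/
def BExp.varFree {T : Type} : BExp T → Prop
  | .tru => True
  | .fls => True
  | .var _ => False
  | .or b c => BExp.varFree b ∧ BExp.varFree c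
  | .and b c => BExp.varFree b ∧ BExp.varFree c
  | .not b => BExp.varFree b

/-- KA expressions: KAT expressions with no test variables. -/
def KExp.testFree {A T : Type} : KExp A T → Prop
  | .test b => b.varFree
  | .act _ => True
  | .plus e f => KExp.testFree e ∧ KExp.testFree f
  | .seq e f => KExp.testFree e ∧ KExp.testFree f
  | .star e => KExp.testFree e

lemma bsem_holds {T S : Type} (τ : T → Set S) (s : S) :
    ∀ b : BExp T, s ∈ bsem τ b ↔ BExp.holds (atomOf τ s) b := by
  intro b
  induction b with
  | tru => simp [bsem, BExp.holds]
  | fls => simp [bsem, BExp.holds]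
  | var t => simp [bsem, BExp.holds, atomOf]
  | or b c ihb ihc => simp [bsem, BExp.holds, ihb, ihc]
  | and b c ihb ihc => simp [bsem, BExp.holds, ihb, ihc]
  | not b ihb => simp [bsem, BExp.holds, ihb]

lemma path_head {A T S : Type} {τ : T → Set S} {σ : A → S → S → Prop} {s s' : S}
    {w : GList A T} (h : IsPath τ σ s w s') :
    ∃ t, w = Sum.inl (atomOf τ s) :: t := by
  cases h with
  | nil => exact ⟨[], rfl⟩
  | cons h1 h2 => exact ⟨_, rfl⟩

lemma path_last {A T S : Type} {τ : T → Set S} {σ : A → S → S → Prop} {s s' : S}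
    {w : GList A T} (h : IsPath τ σ s w s') :
    ∃ u, w = u ++ [Sum.inl (atomOf τ s')] := by
  induction h with
  | nil => exact ⟨[], rfl⟩
  | cons h1 h2 ih =>
      obtain ⟨u, rfl⟩ := ih
      exact ⟨_ :: _ :: u, rfl⟩

lemma path_single {A T S : Type} {τ : T → Set S} {σ : A → S → S → Prop} {s s' : S}
    {α : Set T} (h : IsPath τ σ s [Sum.inl α] s') : s = s' ∧ α = atomOf τ s := by
  cases h with
  | nil => exact ⟨rfl, rfl⟩

lemma path_append {A T S : Type} {τ : T → Set S} {σ : A → S → S → Prop} {s m : S}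
    {w : GList A T} (h : IsPath τ σ s w m) :
    ∀ {u : GList A T} {α : Set T} {v : GList A T} {s' : S},
      w = u ++ [Sum.inl α] → IsPath τ σ m (Sum.inl α :: v) s' →
      IsPath τ σ s (u ++ Sum.inl α :: v) s' := by
  induction h with
  | nil s =>
      intro u α v s' hw h2
      rcases u with _ | ⟨x, u⟩
      · simp_all
      · simp only [List.cons_append, List.cons.injEq] at hw
        rcases hw with ⟨rfl, hw⟩
        exact absurd hw (by simp)
  | @cons t t' t'' p w hp hpath ih =>
      intro u α v s' hw h2
      rcases u with _ | ⟨x, u⟩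
      · simp at hw
      · simp only [List.cons_append, List.cons.injEq] at hw
        rcases hw with ⟨rfl, hw⟩
        rcases u with _ | ⟨y, u⟩
        · simp at hw
        · simp only [List.cons_append, List.cons.injEq] at hw
          rcases hw with ⟨rfl, hw⟩
          exact IsPath.cons hp (ih hw h2)

lemma path_split {A T S : Type} {τ : T → Set S} {σ : A → S → S → Prop} {s s' : S}
    {w : GList A T} (h : IsPath τ σ s w s') :
    ∀ {u : GList A T} {α : Set T} {v : GList A T},
      w = u ++ Sum.inl α :: v →
      ∃ m, IsPath τ σ s (u ++ [Sum.inl α]) m ∧ IsPath τ σ m (Sum.inl α :: v) s' := by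
  induction h with
  | nil t =>
      intro u α v hw
      rcases u with _ | ⟨x, u⟩
      · simp only [List.nil_append, List.cons.injEq] at hw
        rcases hw with ⟨h1, h2⟩
        subst h2
        injection h1 with h1
        subst h1
        exact ⟨t, IsPath.nil t, IsPath.nil t⟩
      · simp only [List.cons_append, List.cons.injEq] at hw
        rcases hw with ⟨rfl, hw⟩
        exact absurd hw (by simp)
  | @cons t t' t'' p w hp hpath ih =>
      intro u α v hw
      rcases u with _ | ⟨x, u⟩
      · simp only [List.nil_append, List.cons.injEq] at hw
        rcases hw with ⟨h1, h2⟩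
        injection h1 with h1
        subst h1 h2
        exact ⟨t, IsPath.nil t, IsPath.cons hp hpath⟩
      · simp only [List.cons_append, List.cons.injEq] at hw
        rcases hw with ⟨rfl, hw⟩
        rcases u with _ | ⟨y, u⟩
        · simp at hw
        · simp only [List.cons_append, List.cons.injEq] at hw
          rcases hw with ⟨rfl, hw⟩
          obtain ⟨m, h1, h2⟩ := ih hw
          exact ⟨m, IsPath.cons hp h1, h2⟩

lemma rsem_iff {A T : Type} (e : KExp A T) (S : Type) (τ : T → Set S)
    (σ : A → S → S → Prop) :
    ∀ s s' : S, rsem τ σ e s s' ↔ ∃ w ∈ lang e, IsPath τ σ s w s' := by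
  induction e with
  | test b =>
      intro s s'
      constructor
      · rintro ⟨rfl, hb⟩
        exact ⟨[Sum.inl (atomOf τ s)],
          ⟨atomOf τ s, (bsem_holds τ s b).mp hb, rfl⟩, IsPath.nil s⟩
      · rintro ⟨w, ⟨α, hα, rfl⟩, hp⟩
        obtain ⟨rfl, rfl⟩ := path_single hp
        exact ⟨rfl, (bsem_holds τ s b).mpr hα⟩
  | act p =>
      intro s s'
      constructor
      · intro h
        exact ⟨[Sum.inl (atomOf τ s), Sum.inr p, Sum.inl (atomOf τ s')],
          ⟨_, _, rfl⟩, IsPath.cons h (IsPath.nil s')⟩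
      · rintro ⟨w, ⟨α, β, rfl⟩, hp⟩
        cases hp with
        | cons h1 h2 =>
            obtain ⟨rfl, -⟩ := path_single h2
            exact h1
  | plus e f ihe ihf =>
      intro s s'
      constructor
      · rintro (h | h)
        · obtain ⟨w, hw, hp⟩ := (ihe s s').mp h
          exact ⟨w, Or.inl hw, hp⟩
        · obtain ⟨w, hw, hp⟩ := (ihf s s').mp h
          exact ⟨w, Or.inr hw, hp⟩
      · rintro ⟨w, hw | hw, hp⟩
        · exact Or.inl ((ihe s s').mpr ⟨w, hw, hp⟩)
        · exact Or.inr ((ihf s s').mpr ⟨w, hw, hp⟩)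
  | seq e f ihe ihf =>
      intro s s'
      constructor
      · rintro ⟨m, he, hf⟩
        obtain ⟨w1, hw1, hp1⟩ := (ihe s m).mp he
        obtain ⟨w2, hw2, hp2⟩ := (ihf m s').mp hf
        obtain ⟨u, rfl⟩ := path_last hp1
        obtain ⟨x, rfl⟩ := path_head hp2
        refine ⟨u ++ Sum.inl (atomOf τ m) :: x, ⟨u, atomOf τ m, x, hw1, hw2, rfl⟩, ?_⟩
        exact path_append hp1 rfl hp2
      · rintro ⟨z, ⟨u, α, x, hu, hx, rfl⟩, hp⟩
        obtain ⟨m, h1, h2⟩ := path_split hp rfl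
        exact ⟨m, (ihe s m).mpr ⟨_, hu, h1⟩, (ihf m s').mpr ⟨_, hx, h2⟩⟩
  | star e ihe =>
      have fwd : ∀ s s' : S, Relation.ReflTransGen (rsem τ σ e) s s' →
          ∃ n, ∃ w ∈ gpow (lang e) n, IsPath τ σ s w s' := by
        intro s s' h
        induction h using Relation.ReflTransGen.head_induction_on with
        | refl => exact ⟨0, [Sum.inl (atomOf τ s')], ⟨_, rfl⟩, IsPath.nil s'⟩
        | @head a b hab hbc ih =>
            obtain ⟨n, w2, hw2, hp2⟩ := ih
            obtain ⟨w1, hw1, hp1⟩ := (ihe a b).mp hab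
            obtain ⟨u, rfl⟩ := path_last hp1
            obtain ⟨x, rfl⟩ := path_head hp2
            exact ⟨n + 1, u ++ Sum.inl (atomOf τ b) :: x,
              ⟨u, atomOf τ b, x, hw1, hw2, rfl⟩, path_append hp1 rfl hp2⟩
      have bwd : ∀ n : ℕ, ∀ s s' : S, ∀ w ∈ gpow (lang e) n, IsPath τ σ s w s' →
          Relation.ReflTransGen (rsem τ σ e) s s' := by
        intro n
        induction n with
        | zero =>
            rintro s s' w ⟨α, rfl⟩ hp
            obtain ⟨rfl, -⟩ := path_single hp
            exact Relation.ReflTransGen.refl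
        | succ n ih =>
            rintro s s' w ⟨u, α, x, hu, hx, rfl⟩ hp
            obtain ⟨m, h1, h2⟩ := path_split hp rfl
            exact Relation.ReflTransGen.head ((ihe s m).mpr ⟨_, hu, h1⟩)
              (ih m s' _ hx h2)
      intro s s'
      constructor
      · intro h
        obtain ⟨n, w, hw, hp⟩ := fwd s s' h
        exact ⟨w, Set.mem_iUnion.mpr ⟨n, hw⟩, hp⟩
      · rintro ⟨w, hw, hp⟩
        obtain ⟨n, hn⟩ := Set.mem_iUnion.mp hw
        exact bwd n s s' w hn hp

/-- the relational semantics of a KAT expression consists exactly of the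
pairs connected by a labeled path whose induced guarded string lies in L(e);
consequently, language equivalence implies relational equivalence. -/
theorem rsem_eq_paths {A T : Type} (e : KExp A T) :
    (∀ (S : Type) (τ : T → Set S) (σ : A → S → S → Prop) (s s' : S),
      rsem τ σ e s s' ↔ ∃ w ∈ lang e, IsPath τ σ s w s') ∧
    (∀ f : KExp A T, lang e = lang f →
      ∀ (S : Type) (τ : T → Set S) (σ : A → S → S → Prop), rsem τ σ e = rsem τ σ f) := by
  refine ⟨fun S τ σ s s' => rsem_iff e S τ σ s s', fun f hef S τ σ => ?_⟩
  funext s s'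
  simp only [eq_iff_iff]
  rw [rsem_iff e S τ σ s s', rsem_iff f S τ σ s s', hef]
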